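/- Let f ∈ S_q with q ∈ [1,∞). Then for every ε > 0 there exist σ_ε > 0 and C > 0 such that F⁻¹(σ) ≤ C σ^{−(q−1+ε)} for all σ ∈ (0, σ_ε). -/
import Mathlib


open MeasureTheory Filter Set Real

/-- for f ∈ S_q, for every ε > 0 there exist σ_ε > 0 and C > 0 such that
F⁻¹(σ) ≤ C σ^{-(q-1+ε)} for all σ ∈ (0, σ_ε). -/
theorem statement5 (f f' : ℝ → ℝ) (q : ℝ) (hq1 : 1 ≤ q)
    (hf_cont : ContinuousOn f (Set.Ici 0))
    (hf_diff : ∀ x > 0, HasDerivAt f (f' x) x)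
    (hf'_cont : ContinuousOn f' (Set.Ioi 0))
    (hf_pos : ∀ x > 0, 0 < f x)
    (hf'_nonneg : ∀ x > 0, 0 ≤ f' x)
    (F : ℝ → ℝ) (hF : ∀ u, F u = ∫ τ in Set.Ioi u, 1 / f τ)
    (hF_fin : ∀ u > 0, IntegrableOn (fun τ => 1 / f τ) (Set.Ioi u))
    (hq : Tendsto (fun ξ => f' ξ * F ξ) atTop (nhds q))
    (Finv : ℝ → ℝ)
    (hFinv_left : ∀ u > 0, Finv (F u) = u)
    (hFinv_right : ∀ ξ > 0, 0 < Finv ξ ∧ F (Finv ξ) = ξ) :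
    ∀ ε > 0, ∃ σε > 0, ∃ C > 0, ∀ σ ∈ Set.Ioo 0 σε,
      Finv σ ≤ C * σ ^ (-(q - 1 + ε)) := by
  intro ε hε
  have hf_contIoi : ContinuousOn f (Set.Ioi 0) :=
    hf_cont.mono (Set.Ioi_subset_Ici le_rfl)
  have hinv_cont : ContinuousOn (fun τ => 1 / f τ) (Set.Ioi 0) :=
    continuousOn_const.div hf_contIoi (fun x hx => (hf_pos x hx).ne')
  -- splitting of F
  have hF_split : ∀ a : ℝ, 0 < a → ∀ x : ℝ, a ≤ x →
      F a = (∫ t in a..x, 1 / f t) + F x := by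
    intro a ha x hax
    have hx : 0 < x := lt_of_lt_of_le ha hax
    have h1 : IntegrableOn (fun τ => 1 / f τ) (Set.Ioc a x) :=
      (hF_fin a ha).mono_set Set.Ioc_subset_Ioi_self
    have h2 : IntegrableOn (fun τ => 1 / f τ) (Set.Ioi x) := hF_fin x hx
    have hunion : Set.Ioc a x ∪ Set.Ioi x = Set.Ioi a := Set.Ioc_union_Ioi_eq_Ioi hax
    have := MeasureTheory.setIntegral_union (f := fun τ => 1 / f τ) (μ := volume)
      Set.Ioc_disjoint_Ioi_same measurableSet_Ioi h1 h2
    rw [hunion] at this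
    rw [hF a, this, hF x, intervalIntegral.integral_of_le hax]
  -- F is positive on positives
  have hF_pos : ∀ u : ℝ, 0 < u → 0 < F u := by
    intro u hu
    have hii : IntervalIntegrable (fun τ => 1 / f τ) volume u (u + 1) := by
      apply (hinv_cont.mono ?_).intervalIntegrable
      rw [Set.uIcc_of_le (by linarith)]
      intro t ht
      exact lt_of_lt_of_le hu ht.1
    have hpos : (0:ℝ) < ∫ t in u..(u+1), 1 / f t := by
      apply intervalIntegral.intervalIntegral_pos_of_pos_on hii ?_ (by linarith)
      intro t ht
      exact one_div_pos.2 (hf_pos t (lt_trans hu ht.1))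
    have := hF_split u hu (u + 1) (by linarith)
    have hF1 : 0 ≤ F (u + 1) := by
      rw [hF (u + 1)]
      apply setIntegral_nonneg measurableSet_Ioi
      intro t ht
      exact le_of_lt (one_div_pos.2 (hf_pos t (lt_trans (by linarith) ht)))
    linarith
  -- derivative of F
  have hF_deriv : ∀ u : ℝ, 0 < u → HasDerivAt F (-(1 / f u)) u := by
    intro u hu
    have ha : (0:ℝ) < u / 2 := by linarith
    have hmem : Set.Ioi (u / 2) ∈ nhds u := isOpen_Ioi.mem_nhds (by simp; linarith)
    have hii : IntervalIntegrable (fun τ => 1 / f τ) volume (u / 2) u := by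
      apply (hinv_cont.mono ?_).intervalIntegrable
      rw [Set.uIcc_of_le (by linarith)]
      intro t ht
      exact lt_of_lt_of_le ha ht.1
    have hsm : StronglyMeasurableAtFilter (fun τ => 1 / f τ) (nhds u) volume :=
      ⟨Set.Ioi 0, isOpen_Ioi.mem_nhds hu, hinv_cont.aestronglyMeasurable measurableSet_Ioi⟩
    have hca : ContinuousAt (fun τ => 1 / f τ) u :=
      hinv_cont.continuousAt (isOpen_Ioi.mem_nhds hu)
    have hD : HasDerivAt (fun x => F (u / 2) - ∫ t in (u/2)..x, 1 / f t) (-(1 / f u)) u := by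
      simpa using
        (intervalIntegral.integral_hasDerivAt_right hii hsm hca).const_sub (F (u / 2))
    apply hD.congr_of_eventuallyEq
    filter_upwards [hmem] with x hx
    have hx2 : u / 2 ≤ x := le_of_lt hx
    have := hF_split (u / 2) ha x hx2
    linarith
  -- the function G = f * F
  set G : ℝ → ℝ := fun u => f u * F u with hG
  have hG_deriv : ∀ u : ℝ, 0 < u → HasDerivAt G (f' u * F u - 1) u := by
    intro u hu
    have := (hf_diff u hu).mul (hF_deriv u hu)
    have hne : f u ≠ 0 := (hf_pos u hu).ne'
    have : HasDerivAt G (f' u * F u + f u * -(1 / f u)) u := this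
    convert this using 1
    field_simp
    ring
  have hG_pos : ∀ u : ℝ, 0 < u → 0 < G u := fun u hu =>
    mul_pos (hf_pos u hu) (hF_pos u hu)
  -- eventually f' * F ≤ q + ε/3
  obtain ⟨u₀', hu₀'⟩ : ∃ N : ℝ, ∀ x ≥ N, f' x * F x ≤ q + ε / 3 := by
    have := hq.eventually (eventually_le_nhds (show q < q + ε/3 by linarith))
    exact (eventually_atTop).1 this
  set p₁ := q - 1 + ε / 3 with hp₁def
  set p₂ := q - 1 + ε / 2 with hp₂def
  have hp₁pos : 0 < p₁ := by simp only [hp₁def]; linarith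
  have hp₂pos : 0 < p₂ := by simp only [hp₂def]; linarith
  set u₀ := max u₀' 1 with hu₀def
  have hu₀pos : (0:ℝ) < u₀ := lt_of_lt_of_le one_pos (le_max_right _ _)
  -- linear growth bound on G
  have hGlin : ∀ u, u₀ ≤ u → G u ≤ G u₀ + p₁ * (u - u₀) := by
    intro u hu
    have hanti : AntitoneOn (fun x => G x - p₁ * x) (Set.Ici u₀) := by
      have hD : ∀ x ∈ Set.Ioi (0:ℝ), HasDerivAt (fun y => G y - p₁ * y)
          (f' x * F x - 1 - p₁ * 1) x := by
        intro x hx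
        exact (hG_deriv x hx).sub ((hasDerivAt_id x).const_mul p₁)
      apply antitoneOn_of_deriv_nonpos (convex_Ici u₀)
      · intro x hx
        exact (hD x (lt_of_lt_of_le hu₀pos hx)).continuousAt.continuousWithinAt
      · rw [interior_Ici]
        intro x hx
        exact (hD x (lt_trans hu₀pos hx)).differentiableAt.differentiableWithinAt
      · rw [interior_Ici]
        intro x hx
        rw [(hD x (lt_trans hu₀pos hx)).deriv]
        have h1 : f' x * F x ≤ q + ε / 3 :=
          hu₀' x (le_trans (le_max_left _ _) (le_of_lt hx))
        simp only [hp₁def]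
        linarith
    have := hanti (Set.self_mem_Ici) hu hu
    simp only at this
    linarith
  set u₁ := max u₀ (6 * G u₀ / ε) with hu₁def
  have hu₁pos : (0:ℝ) < u₁ := lt_of_lt_of_le hu₀pos (le_max_left _ _)
  have hGle : ∀ u, u₁ ≤ u → G u ≤ p₂ * u := by
    intro u hu
    have h1 : G u ≤ G u₀ + p₁ * (u - u₀) :=
      hGlin u (le_trans (le_max_left _ _) hu)
    have h2 : 6 * G u₀ / ε ≤ u := le_trans (le_max_right _ _) hu
    have h3 : 6 * G u₀ ≤ ε * u := by
      rw [div_le_iff₀ hε] at h2; linarith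
    have h4 : 0 ≤ p₁ * u₀ := mul_nonneg hp₁pos.le hu₀pos.le
    simp only [hp₁def] at h1
    simp only [hp₂def]
    nlinarith
  -- log comparison
  set φ : ℝ → ℝ := fun u => Real.log (F u) + (1 / p₂) * Real.log u with hφdef
  have hφanti : AntitoneOn φ (Set.Ici u₁) := by
    have hD : ∀ x ∈ Set.Ioi (0:ℝ), HasDerivAt φ
        (-(1 / f x) / F x + (1 / p₂) * x⁻¹) x := by
      intro x hx
      exact ((hF_deriv x hx).log (hF_pos x hx).ne').add
        ((Real.hasDerivAt_log (ne_of_gt hx)).const_mul (1 / p₂))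
    apply antitoneOn_of_deriv_nonpos (convex_Ici u₁)
    · intro x hx
      exact (hD x (lt_of_lt_of_le hu₁pos hx)).continuousAt.continuousWithinAt
    · rw [interior_Ici]
      intro x hx
      exact (hD x (lt_trans hu₁pos hx)).differentiableAt.differentiableWithinAt
    · rw [interior_Ici]
      intro x hx
      have hx0 : 0 < x := lt_trans hu₁pos hx
      rw [(hD x hx0).deriv]
      have hGx : 0 < G x := hG_pos x hx0
      have hle : G x ≤ p₂ * x := hGle x (le_of_lt hx)
      have h1 : 1 / (p₂ * x) ≤ 1 / (f x * F x) := one_div_le_one_div_of_le hGx hle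
      have hfx := (hf_pos x hx0).ne'
      have hFx := (hF_pos x hx0).ne'
      have hxne := hx0.ne'
      have hp₂ne := hp₂pos.ne'
      have e : -(1 / f x) / F x + 1 / p₂ * x⁻¹ =
          1 / (p₂ * x) - 1 / (f x * F x) := by
        field_simp
        ring
      rw [e]
      linarith
  -- polynomial upper bound of F
  set L := Real.log (F u₁) + (1 / p₂) * Real.log u₁ with hLdef
  have hFbound : ∀ u, u₁ ≤ u → F u ≤ Real.exp L * u ^ (-(1 / p₂)) := by
    intro u hu
    have hu0 : 0 < u := lt_of_lt_of_le hu₁pos hu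
    have h1 : φ u ≤ φ u₁ := hφanti Set.self_mem_Ici hu hu
    have h2 : Real.log (F u) ≤ L - (1 / p₂) * Real.log u := by
      simp only [hφdef, hLdef] at h1 ⊢; linarith
    calc F u = Real.exp (Real.log (F u)) := (Real.exp_log (hF_pos u hu0)).symm
      _ ≤ Real.exp (L - (1 / p₂) * Real.log u) := Real.exp_le_exp.2 h2
      _ = Real.exp L * u ^ (-(1 / p₂)) := by
          rw [Real.exp_sub, Real.rpow_def_of_pos hu0, div_eq_mul_inv, ← Real.exp_neg]
          congr 1
          ring
  -- conclusion
  refine ⟨1, one_pos, max u₁ (Real.exp L ^ p₂), lt_of_lt_of_le hu₁pos (le_max_left _ _), ?_⟩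
  intro σ hσ
  obtain ⟨hσ0, hσ1⟩ := hσ
  set C := max u₁ (Real.exp L ^ p₂) with hCdef
  have hC0 : 0 < C := lt_of_lt_of_le hu₁pos (le_max_left _ _)
  obtain ⟨hu0, hFu⟩ := hFinv_right σ hσ0
  set u := Finv σ with hudef
  have hσp : (1:ℝ) ≤ σ ^ (-(q - 1 + ε)) := by
    have := Real.rpow_le_rpow_of_exponent_ge hσ0 hσ1.le
      (show -(q - 1 + ε) ≤ 0 by linarith)
    rwa [Real.rpow_zero] at this
  rcases le_total u u₁ with hcase | hcase
  · calc u ≤ u₁ := hcase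
      _ ≤ C := le_max_left _ _
      _ = C * 1 := (mul_one C).symm
      _ ≤ C * σ ^ (-(q - 1 + ε)) := by
          exact mul_le_mul_of_nonneg_left hσp hC0.le
  · have hσle : σ ≤ Real.exp L * u ^ (-(1 / p₂)) := by
      rw [← hFu]; exact hFbound u hcase
    have ht0 : 0 < u ^ (1 / p₂) := Real.rpow_pos_of_pos hu0 _
    have hrw : u ^ (-(1 / p₂)) = (u ^ (1 / p₂))⁻¹ := by
      rw [Real.rpow_neg hu0.le]
    have h5 : u ^ (1 / p₂) ≤ Real.exp L / σ := by
      rw [le_div_iff₀ hσ0]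
      rw [hrw] at hσle
      calc u ^ (1 / p₂) * σ ≤ u ^ (1 / p₂) * (Real.exp L * (u ^ (1 / p₂))⁻¹) :=
            mul_le_mul_of_nonneg_left hσle ht0.le
        _ = Real.exp L := by field_simp
    have h6 : u ≤ (Real.exp L / σ) ^ p₂ := by
      have := Real.rpow_le_rpow ht0.le h5 hp₂pos.le
      rwa [← Real.rpow_mul hu0.le, one_div,
        inv_mul_cancel₀ hp₂pos.ne', Real.rpow_one] at this
    have h7 : (Real.exp L / σ) ^ p₂ = Real.exp L ^ p₂ * σ ^ (-p₂) := by
      rw [div_eq_mul_inv, Real.mul_rpow (Real.exp_pos L).le (inv_nonneg.2 hσ0.le),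
        ← Real.rpow_neg_one σ, ← Real.rpow_mul hσ0.le]
      ring_nf
    have h8 : σ ^ (-p₂) ≤ σ ^ (-(q - 1 + ε)) := by
      apply Real.rpow_le_rpow_of_exponent_ge hσ0 hσ1.le
      simp only [hp₂def]; linarith
    calc u ≤ (Real.exp L / σ) ^ p₂ := h6
      _ = Real.exp L ^ p₂ * σ ^ (-p₂) := h7
      _ ≤ C * σ ^ (-(q - 1 + ε)) := by
          apply mul_le_mul (le_max_right _ _) h8
            (Real.rpow_nonneg hσ0.le _) hC0.le
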